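/- Let a < 0 be a real number, let X > 1 be a real number, and let n be a positive integer. Then ∫_{−log X}^{0} e^{(1−a)x} · [∑_{l=1}^{n} binom(n, l) (1 − 2a)^{l} x^{l−1}/(l−1)!] dx = 1 − (1 + (2a − 1)/(1 − a))^{n} + ∑_{l=1}^{n} binom(n, l) (2a − 1)^{l} X^{a−1} ∑_{k=0}^{l−1} (log X)^{k}/(k! (1 − a)^{l−k}). -/

import Mathlib

lemma ttao_hasDerivAt (c : ℝ) (hc : c ≠ 0) (m : ℕ) (x : ℝ) :
    HasDerivAt (fun y : ℝ => Real.exp (c * y) *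
        ∑ k ∈ Finset.range (m + 1), (-1 : ℝ) ^ (m - k) * y ^ k /
          (Nat.factorial k * c ^ (m + 1 - k)))
      (Real.exp (c * x) * x ^ m / Nat.factorial m) x := by
  induction m with
  | zero =>
      simp only [Finset.sum_range_one, pow_zero, Nat.factorial_zero]
      have h1 : HasDerivAt (fun y : ℝ => Real.exp (c * y)) (Real.exp (c * x) * c) x := by
        simpa using ((hasDerivAt_id x).const_mul c).exp
      have := h1.mul_const ((1:ℝ) * 1 / (1 * c ^ (1:ℕ)))
      convert this using 1
      · rfl
      · rfl
      · funext y
        rw [Finset.sum_range_one]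
        norm_num
      · field_simp
        norm_num
  | succ m ih =>
      have key : ∀ y : ℝ, (∑ k ∈ Finset.range (m + 2), (-1 : ℝ) ^ (m + 1 - k) * y ^ k /
            (Nat.factorial k * c ^ (m + 2 - k)))
          = y ^ (m + 1) / (Nat.factorial (m + 1) * c) -
            (1 / c) * ∑ k ∈ Finset.range (m + 1), (-1 : ℝ) ^ (m - k) * y ^ k /
              (Nat.factorial k * c ^ (m + 1 - k)) := by
        intro y
        rw [Finset.sum_range_succ, show m + 2 - (m + 1) = 1 by omega,
          show m + 1 - (m + 1) = 0 by omega]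
        have hcongr : ∀ k ∈ Finset.range (m + 1),
            (-1 : ℝ) ^ (m + 1 - k) * y ^ k / (Nat.factorial k * c ^ (m + 2 - k))
            = (-(1 / c)) * ((-1 : ℝ) ^ (m - k) * y ^ k / (Nat.factorial k * c ^ (m + 1 - k))) := by
          intro k hk
          have hk' : k ≤ m := Nat.lt_succ_iff.mp (Finset.mem_range.mp hk)
          rw [show m + 1 - k = (m - k) + 1 by omega, show m + 2 - k = ((m - k) + 1) + 1 by omega]
          have hf : (Nat.factorial k : ℝ) ≠ 0 := Nat.cast_ne_zero.mpr (Nat.factorial_ne_zero k)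
          rw [pow_succ (-1 : ℝ) (m - k), pow_succ c (m - k + 1)]
          have hcp : c ^ (m - k + 1) ≠ 0 := pow_ne_zero _ hc
          field_simp
        rw [Finset.sum_congr rfl hcongr, ← Finset.mul_sum]
        simp only [pow_zero, pow_one, one_mul]
        ring
      have h1 : HasDerivAt (fun y : ℝ => Real.exp (c * y)) (Real.exp (c * x) * c) x := by
        simpa using ((hasDerivAt_id x).const_mul c).exp
      have h2 : HasDerivAt (fun y : ℝ => y ^ (m + 1)) ((m + 1 : ℕ) * x ^ m) x :=
        hasDerivAt_pow (m + 1) x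
      have h3 := ((h1.mul h2).div_const ((Nat.factorial (m + 1) : ℝ) * c)).sub
        (ih.const_mul (1 / c))
      have heq : (fun y : ℝ => Real.exp (c * y) *
          ∑ k ∈ Finset.range (m + 1 + 1), (-1 : ℝ) ^ (m + 1 - k) * y ^ k /
            (Nat.factorial k * c ^ (m + 1 + 1 - k)))
          = fun y : ℝ => Real.exp (c * y) * y ^ (m + 1) / (Nat.factorial (m + 1) * c)
            - (1 / c) * (Real.exp (c * y) * ∑ k ∈ Finset.range (m + 1),
                (-1 : ℝ) ^ (m - k) * y ^ k / (Nat.factorial k * c ^ (m + 1 - k))) := by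
        funext y
        rw [show m + 1 + 1 = m + 2 from rfl, key y]
        ring
      rw [heq]
      convert h3 using 1
      · rfl
      · rfl
      · rfl
      have hf : (Nat.factorial m : ℝ) ≠ 0 := Nat.cast_ne_zero.mpr (Nat.factorial_ne_zero m)
      have hfs : (Nat.factorial (m + 1) : ℝ) = (m + 1) * Nat.factorial m := by
        push_cast [Nat.factorial_succ]; ring
      rw [hfs]
      have hm1 : (m : ℝ) + 1 ≠ 0 := by positivity
      field_simp
      push_cast
      ring

lemma ttao_integral (c : ℝ) (hc : c ≠ 0) (m : ℕ) (L : ℝ) :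
    ∫ x in (-L)..(0 : ℝ), Real.exp (c * x) * x ^ m / Nat.factorial m
      = (-1 : ℝ) ^ m / c ^ (m + 1) - Real.exp (-(c * L)) *
          ∑ k ∈ Finset.range (m + 1), (-1 : ℝ) ^ (m - k) * (-L) ^ k /
            (Nat.factorial k * c ^ (m + 1 - k)) := by
  have hcont : Continuous fun x : ℝ => Real.exp (c * x) * x ^ m / Nat.factorial m :=
    ((Real.continuous_exp.comp (continuous_const.mul continuous_id)).mul
      (continuous_pow m)).div_const _
  rw [intervalIntegral.integral_eq_sub_of_hasDerivAt
    (fun x _ => ttao_hasDerivAt c hc m x) (hcont.intervalIntegrable _ _)]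
  have h0 : (∑ k ∈ Finset.range (m + 1), (-1 : ℝ) ^ (m - k) * (0 : ℝ) ^ k /
      (Nat.factorial k * c ^ (m + 1 - k))) = (-1 : ℝ) ^ m / c ^ (m + 1) := by
    rw [Finset.sum_eq_single 0]
    · norm_num
    · intro k _ hk
      rw [zero_pow hk]
      simp
    · intro h; simp at h
  rw [mul_zero, Real.exp_zero, one_mul, h0, mul_comm c (-L)]
  ring_nf

/-- Evaluation of the truncated transform `H_{n,X}(1)`. -/
theorem truncated_transform_at_one (a : ℝ) (ha : a < 0) (X : ℝ) (hX : 1 < X)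
    (n : ℕ) (hn : 0 < n) :
    ∫ x in (-Real.log X)..(0 : ℝ), Real.exp ((1 - a) * x) *
        ∑ l ∈ Finset.Icc 1 n, (n.choose l : ℝ) * (1 - 2 * a) ^ l * x ^ (l - 1) /
          (Nat.factorial (l - 1) : ℝ) =
      1 - (1 + (2 * a - 1) / (1 - a)) ^ n +
        ∑ l ∈ Finset.Icc 1 n, (n.choose l : ℝ) * (2 * a - 1) ^ l * X ^ (a - 1) *
          ∑ k ∈ Finset.range l,
            (Real.log X) ^ k / ((Nat.factorial k : ℝ) * (1 - a) ^ (l - k)) := by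
  have hc : (1 - a) ≠ 0 := by linarith
  have hX0 : (0 : ℝ) < X := by linarith
  -- push the exponential into the sum and exchange sum and integral
  have hrw : (fun x : ℝ => Real.exp ((1 - a) * x) *
      ∑ l ∈ Finset.Icc 1 n, (n.choose l : ℝ) * (1 - 2 * a) ^ l * x ^ (l - 1) /
        (Nat.factorial (l - 1) : ℝ))
      = fun x : ℝ => ∑ l ∈ Finset.Icc 1 n,
          ((n.choose l : ℝ) * (1 - 2 * a) ^ l) *
            (Real.exp ((1 - a) * x) * x ^ (l - 1) / (Nat.factorial (l - 1) : ℝ)) := by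
    funext x
    rw [Finset.mul_sum]
    refine Finset.sum_congr rfl fun l _ => ?_
    ring
  rw [intervalIntegral.integral_congr (fun x _ => congrFun hrw x)]
  rw [intervalIntegral.integral_finset_sum]
  swap
  · intro l _
    apply Continuous.intervalIntegrable
    exact continuous_const.mul (((Real.continuous_exp.comp
      (continuous_const.mul continuous_id)).mul (continuous_pow _)).div_const _)
  -- evaluate each term
  have step : ∀ l ∈ Finset.Icc 1 n,
      (∫ x in (-Real.log X)..(0 : ℝ), ((n.choose l : ℝ) * (1 - 2 * a) ^ l) *
          (Real.exp ((1 - a) * x) * x ^ (l - 1) / (Nat.factorial (l - 1) : ℝ)))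
      = -((n.choose l : ℝ) * ((2 * a - 1) / (1 - a)) ^ l) +
        (n.choose l : ℝ) * (2 * a - 1) ^ l * X ^ (a - 1) *
          ∑ k ∈ Finset.range l,
            (Real.log X) ^ k / ((Nat.factorial k : ℝ) * (1 - a) ^ (l - k)) := by
    intro l hl
    have hl1 : 1 ≤ l := (Finset.mem_Icc.mp hl).1
    have hml : l - 1 + 1 = l := Nat.succ_pred_eq_of_pos hl1
    rw [intervalIntegral.integral_const_mul,
      ttao_integral (1 - a) hc (l - 1) (Real.log X), hml]
    have hexp : Real.exp (-((1 - a) * Real.log X)) = X ^ (a - 1) := by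
      rw [Real.rpow_def_of_pos hX0]
      congr 1
      ring
    have hsum : (∑ k ∈ Finset.range l, (-1 : ℝ) ^ (l - 1 - k) * (-Real.log X) ^ k /
          (Nat.factorial k * (1 - a) ^ (l - k)))
        = (-1 : ℝ) ^ (l - 1) * ∑ k ∈ Finset.range l,
            (Real.log X) ^ k / ((Nat.factorial k : ℝ) * (1 - a) ^ (l - k)) := by
      rw [Finset.mul_sum]
      refine Finset.sum_congr rfl fun k hk => ?_
      have hk' : k ≤ l - 1 := by
        have := Finset.mem_range.mp hk; omega
      have h1 : (-Real.log X) ^ k = (-1 : ℝ) ^ k * (Real.log X) ^ k := by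
        rw [neg_pow]
      have h2 : (-1 : ℝ) ^ (l - 1 - k) * (-1 : ℝ) ^ k = (-1 : ℝ) ^ (l - 1) := by
        rw [← pow_add]; congr 1; omega
      calc (-1 : ℝ) ^ (l - 1 - k) * (-Real.log X) ^ k /
              (Nat.factorial k * (1 - a) ^ (l - k))
          = ((-1 : ℝ) ^ (l - 1 - k) * (-1 : ℝ) ^ k) *
              ((Real.log X) ^ k / (Nat.factorial k * (1 - a) ^ (l - k))) := by
            rw [h1]; ring
        _ = (-1 : ℝ) ^ (l - 1) *
              ((Real.log X) ^ k / (Nat.factorial k * (1 - a) ^ (l - k))) := by rw [h2]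
    set S : ℝ := ∑ k ∈ Finset.range l,
        (Real.log X) ^ k / ((Nat.factorial k : ℝ) * (1 - a) ^ (l - k)) with hS
    rw [hexp, hsum]
    have hsign : ((1 - 2 * a) ^ l : ℝ) * (-1 : ℝ) ^ (l - 1) = -(2 * a - 1) ^ l := by
      have : ((1 - 2 * a) ^ l : ℝ) * (-1 : ℝ) ^ l = (2 * a - 1) ^ l := by
        rw [← mul_pow]; congr 1; ring
      have hll : (-1 : ℝ) ^ (l - 1) * (-1 : ℝ) = (-1 : ℝ) ^ l := by
        rw [← pow_succ, hml]
      linear_combination (-1 : ℝ) * this - (1 - 2 * a) ^ l * hll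
    have hdiv : ((2 * a - 1) / (1 - a)) ^ l = (2 * a - 1) ^ l / (1 - a) ^ l := by
      rw [div_pow]
    rw [hdiv]
    linear_combination ((n.choose l : ℝ) * ((1 : ℝ) / (1 - a) ^ l - X ^ (a - 1) * S)) * hsign
  rw [Finset.sum_congr rfl step, Finset.sum_add_distrib]
  congr 1
  -- binomial sum
  set t : ℝ := (2 * a - 1) / (1 - a) with ht
  have hbin : (1 + t) ^ n = ∑ l ∈ Finset.range (n + 1), (n.choose l : ℝ) * t ^ l := by
    rw [add_comm, add_pow]
    refine Finset.sum_congr rfl fun l _ => ?_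
    rw [one_pow]; ring
  have hsplit : ∑ l ∈ Finset.Icc 1 n, (n.choose l : ℝ) * t ^ l = (1 + t) ^ n - 1 := by
    rw [show Finset.Icc 1 n = Finset.Ico 1 (n + 1) from (Finset.Ico_add_one_right_eq_Icc 1 n).symm,
      Finset.sum_Ico_eq_sub _ (by omega), ← hbin]
    simp
  rw [Finset.sum_neg_distrib, hsplit]
  ring
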